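/- arXiv:2603.06027 — 3 statements merged into one kernel-verified Lean document; each statement's English description precedes it below -/
import Mathlib

section
/- For every odd k ∈ ℕ, the k-th Hermite coefficient of the sign function satisfies ⟨sign, H_k⟩_γ = ∫_ℝ sign(y) H_k(y) dγ(y) = √(2/(kπ)) · H_{k−1}(0). -/
open MeasureTheory ProbabilityTheory Real

/-- The `k`-th normalized Hermite polynomial (as a function on `ℝ`): the monic
probabilist's Hermite polynomial divided by `√(k!)`. -/
noncomputable def normHermite (k : ℕ) (x : ℝ) : ℝ :=
  Polynomial.aeval x (Polynomial.hermite k) / Real.sqrt (Nat.factorial k)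

/-- The sign function: `1` if `x ≥ 0`, `-1` otherwise. -/
noncomputable def signFn (x : ℝ) : ℝ := if 0 ≤ x then 1 else -1

section auxiliary
open Polynomial Filter Set

lemma integrable_pow_gauss (n : ℕ) :
    Integrable (fun x : ℝ => x ^ n * Real.exp (-(x ^ 2 / 2))) := by
  have h : ∀ x : ℝ, -(x ^ 2 / 2) = -(1/2) * x ^ 2 := fun x => by ring
  simp_rw [h, ← Real.rpow_natCast _ n]
  exact integrable_rpow_mul_exp_neg_mul_sq (by norm_num)
    (lt_of_lt_of_le (by norm_num) (Nat.cast_nonneg n))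

lemma integrable_poly_gauss (p : ℤ[X]) :
    Integrable (fun x : ℝ => aeval x p * Real.exp (-(x ^ 2 / 2))) := by
  induction p using Polynomial.induction_on' with
  | add p q hp hq => simp only [map_add, add_mul]; exact hp.add hq
  | monomial n a =>
      simp only [aeval_monomial, mul_assoc]
      exact (integrable_pow_gauss n).const_mul _

lemma tendsto_pow_gauss (n : ℕ) :
    Tendsto (fun x : ℝ => x ^ n * Real.exp (-(x ^ 2 / 2))) atTop (nhds 0) := by
  have h : ∀ x : ℝ, -(x ^ 2 / 2) = -(1/2) * x ^ 2 := fun x => by ring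
  have hg : Tendsto (fun x : ℝ => Real.exp (-(1/2) * x)) atTop (nhds 0) :=
    Real.tendsto_exp_atBot.comp
      (Filter.Tendsto.const_mul_atTop_of_neg (by norm_num : -(1/2 : ℝ) < 0) tendsto_id)
  simp_rw [h, ← Real.rpow_natCast _ n]
  exact (rpow_mul_exp_neg_mul_sq_isLittleO_exp_neg (by norm_num) _).tendsto_zero_of_tendsto hg

lemma tendsto_poly_gauss (p : ℤ[X]) :
    Tendsto (fun x : ℝ => aeval x p * Real.exp (-(x ^ 2 / 2))) atTop (nhds 0) := by
  induction p using Polynomial.induction_on' with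
  | add p q hp hq => simpa [add_mul] using hp.add hq
  | monomial n a =>
      simp only [aeval_monomial, mul_assoc]
      simpa using (tendsto_pow_gauss n).const_mul ((algebraMap ℤ ℝ) a)

/-- Parity of the Hermite polynomials: `Hₙ(-x) = (-1)ⁿ Hₙ(x)`. -/
lemma hermite_aeval_neg (n : ℕ) (x : ℝ) :
    aeval (-x) (hermite n) = (-1 : ℝ) ^ n * aeval x (hermite n) := by
  rw [aeval_eq_sum_range (R := ℤ) (x := -x), aeval_eq_sum_range (R := ℤ) (x := x),
    Finset.mul_sum]
  refine Finset.sum_congr rfl fun i _ => ?_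
  rcases Nat.even_or_odd (n + i) with h | h
  · have h1 : (-1 : ℝ) ^ (n + i) = 1 := h.neg_one_pow
    rw [pow_add] at h1
    have hpow : (-1 : ℝ) ^ i = (-1 : ℝ) ^ n := by
      rcases neg_one_pow_eq_or ℝ n with hn | hn <;> rcases neg_one_pow_eq_or ℝ i with hi | hi <;>
        rw [hn, hi] at h1 ⊢ <;> norm_num at h1
    rw [zsmul_eq_mul, zsmul_eq_mul, neg_pow, hpow]; ring
  · rw [coeff_hermite_of_odd_add h]
    simp

/-- Fundamental theorem of calculus for the Hermite-weighted Gaussian on `(0, ∞)`: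
the antiderivative of `Hₘ₊₁(x) e^{-x²/2}` is `-Hₘ(x) e^{-x²/2}`. -/
lemma ftc_hermite (m : ℕ) :
    ∫ x in Ioi (0:ℝ), aeval x (hermite (m+1)) * Real.exp (-(x ^ 2 / 2))
      = aeval (0:ℝ) (hermite m) := by
  have hderiv : ∀ x ∈ Ici (0:ℝ),
      HasDerivAt (fun x : ℝ => -(aeval x (hermite m) * Real.exp (-(x ^ 2 / 2))))
        (aeval x (hermite (m+1)) * Real.exp (-(x ^ 2 / 2))) x := by
    intro x _
    have h1 := (hermite m).hasDerivAt_aeval (𝕜 := ℝ) x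
    have h2 : HasDerivAt (fun x : ℝ => Real.exp (-(x ^ 2 / 2)))
        (-x * Real.exp (-(x ^ 2 / 2))) x := by
      have := (((hasDerivAt_pow 2 x).div_const 2).fun_neg).exp
      convert this using 1
      push_cast; ring
    have h3 := (h1.fun_mul h2).fun_neg
    refine h3.congr_deriv ?_
    rw [hermite_succ]
    simp only [map_sub, map_mul, aeval_X]
    ring
  have hint : IntegrableOn (fun x : ℝ => aeval x (hermite (m+1)) * Real.exp (-(x ^ 2 / 2)))
      (Ioi 0) := (integrable_poly_gauss _).integrableOn
  have htend : Tendsto (fun x : ℝ => -(aeval x (hermite m) * Real.exp (-(x ^ 2 / 2))))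
      atTop (nhds 0) := by
    simpa using (tendsto_poly_gauss (hermite m)).neg
  rw [integral_Ioi_of_hasDerivAt_of_tendsto' hderiv hint htend]
  simp

end auxiliary

theorem stmt_7 (k : ℕ) (hk : Odd k) :
    ∫ y, signFn y * normHermite k y ∂(gaussianReal 0 1)
      = Real.sqrt (2 / (k * π)) * normHermite (k - 1) 0 := by
  obtain ⟨m, rfl⟩ : ∃ m, k = m + 1 := ⟨k - 1, by have := hk.pos; omega⟩
  set k := m + 1 with hkdef
  have hmeas : Measurable fun x => (gaussianPDFReal 0 1 x).toNNReal :=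
    (measurable_gaussianPDFReal 0 1).real_toNNReal
  have hγ : gaussianReal 0 1
      = volume.withDensity (fun x => ((gaussianPDFReal 0 1 x).toNNReal : ENNReal)) := by
    rw [gaussianReal_of_var_ne_zero 0 one_ne_zero]
    rfl
  rw [hγ, integral_withDensity_eq_integral_smul hmeas]
  set C : ℝ := (Real.sqrt (2 * π))⁻¹ / Real.sqrt (k.factorial) with hC
  have hpt : ∀ y : ℝ, (gaussianPDFReal 0 1 y).toNNReal • (signFn y * normHermite k y)
      = C * (Polynomial.aeval |y| (Polynomial.hermite k) * Real.exp (-(|y| ^ 2 / 2))) := by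
    intro y
    rw [NNReal.smul_def, Real.coe_toNNReal _ (gaussianPDFReal_nonneg 0 1 y)]
    rw [gaussianPDFReal, normHermite, signFn]
    simp only [NNReal.coe_one, mul_one, sub_zero, sq_abs, smul_eq_mul, neg_div]
    rcases le_or_gt 0 y with hy | hy
    · rw [if_pos hy, abs_of_nonneg hy, hC]; ring
    · rw [if_neg (not_le.mpr hy), abs_of_neg hy, hermite_aeval_neg, hk.neg_one_pow, hC]; ring
  simp_rw [hpt]
  rw [MeasureTheory.integral_const_mul, integral_comp_abs
      (f := fun x => Polynomial.aeval x (Polynomial.hermite k) * Real.exp (-(x ^ 2 / 2))),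
    ftc_hermite m]
  show C * (2 * Polynomial.aeval (0:ℝ) (Polynomial.hermite m)) = _
  have hksub : k - 1 = m := rfl
  rw [hksub, normHermite]
  have hconst : C * 2 = Real.sqrt (2 / (k * π)) / Real.sqrt (m.factorial) := by
    have hfact : ((k.factorial : ℝ)) = k * (m.factorial) := by
      rw [hkdef]; push_cast [Nat.factorial_succ]; ring
    have hπ : 0 < π := pi_pos
    have hk0 : (0:ℝ) < k := by positivity
    have hm0 : (0:ℝ) < m.factorial := by positivity
    have h1 : C * 2 = Real.sqrt (2 / (π * k.factorial)) := by
      rw [hC, show (2:ℝ) / (π * k.factorial) = 4 / ((2 * π) * k.factorial) by ring,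
        Real.sqrt_div (by norm_num : (0:ℝ) ≤ 4),
        Real.sqrt_mul (by positivity : (0:ℝ) ≤ 2 * π),
        show Real.sqrt 4 = 2 by
          rw [show (4:ℝ) = 2 ^ 2 by norm_num, Real.sqrt_sq (by norm_num : (0:ℝ) ≤ 2)]]
      ring
    have h2 : Real.sqrt (2 / (k * π)) / Real.sqrt (m.factorial)
        = Real.sqrt (2 / (π * k.factorial)) := by
      rw [← Real.sqrt_div (by positivity : (0:ℝ) ≤ 2 / (k * π))]
      congr 1
      rw [hfact]
      field_simp
    rw [h1, h2]
  rw [← mul_assoc, hconst]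
  ring
end

section
/- There exists a constant C > 0 such that for every integer d ≥ 2, with τ = √(100·log d), ∫_0^∞ |1 − (2/π)·∫_0^{min(τ,x)} sin(t√d)/t dt| · φ(x) dx ≤ C · (log d)/√d. -/
open MeasureTheory ProbabilityTheory Real

/-- The standard Gaussian density on `ℝ`. -/
noncomputable def gaussDensity (x : ℝ) : ℝ := Real.exp (-x ^ 2 / 2) / Real.sqrt (2 * π)

/-- The sine integral. -/
noncomputable def Si (M : ℝ) : ℝ := ∫ u in (0:ℝ)..M, Real.sin u / u

lemma abs_sinc_le_one (u : ℝ) : |Real.sin u / u| ≤ 1 := by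
  rcases eq_or_ne u 0 with rfl | hu
  · simp
  · rw [abs_div, div_le_one (by positivity)]
    exact Real.abs_sin_le_abs

lemma sinc_intervalIntegrable (a b : ℝ) :
    IntervalIntegrable (fun u => Real.sin u / u) volume a b := by
  rw [intervalIntegrable_iff]
  refine Integrable.mono' (g := fun _ => (1:ℝ)) ?_ ?_ ?_
  · exact (integrableOn_const measure_Ioc_lt_top.ne)
  · exact (Real.measurable_sin.div measurable_id).aestronglyMeasurable
  · exact Filter.Eventually.of_forall fun u => by
      simpa only [Real.norm_eq_abs] using _root_.abs_sinc_le_one u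

lemma Si_continuous : Continuous Si :=
  intervalIntegral.continuous_primitive (fun a b => sinc_intervalIntegrable a b) 0

lemma integrableOn_exp_neg_mul {u : ℝ} (hu : 0 < u) :
    IntegrableOn (fun t : ℝ => Real.exp (-(t * u))) (Set.Ioi 0) := by
  have := exp_neg_integrableOn_Ioi (0:ℝ) hu
  refine this.congr_fun (fun t _ => by ring_nf) measurableSet_Ioi

lemma integral_exp_tail {u : ℝ} (hu : 0 < u) :
    ∫ t in Set.Ioi (0:ℝ), Real.exp (-(t * u)) = 1 / u := by
  have h := integral_Ioi_of_hasDerivAt_of_tendsto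
    (f := fun t : ℝ => -Real.exp (-(t * u)) / u)
    (f' := fun t : ℝ => Real.exp (-(t * u))) (a := 0) (m := 0)
    ?_ ?_ (integrableOn_exp_neg_mul hu) ?_
  · rw [h]; norm_num [neg_div]
  · exact (Continuous.continuousWithinAt (by continuity))
  · intro x _
    have hinner : HasDerivAt (fun t : ℝ => -(t * u)) (-u) x := by
      exact (hasDerivAt_mul_const u).neg
    have := ((Real.hasDerivAt_exp (-(x*u))).comp x hinner).neg.div_const u
    refine this.congr_deriv ?_
    field_simp
  · have h1 : Filter.Tendsto (fun t : ℝ => t * u) Filter.atTop Filter.atTop :=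
      Filter.Tendsto.atTop_mul_const hu Filter.tendsto_id
    have h2 : Filter.Tendsto (fun t : ℝ => Real.exp (-(t * u))) Filter.atTop (nhds 0) :=
      Real.tendsto_exp_neg_atTop_nhds_zero.comp h1
    simpa using (h2.neg.div_const u)

lemma integral_exp_sin (t M : ℝ) :
    ∫ u in (0:ℝ)..M, Real.exp (-(t*u)) * Real.sin u
      = (1 - Real.exp (-(t*M)) * (Real.cos M + t * Real.sin M)) / (1 + t^2) := by
  have h1t : (0:ℝ) < 1 + t^2 := by positivity
  have key : ∀ u : ℝ, HasDerivAt
      (fun u : ℝ => -(Real.exp (-(t*u)) * (Real.cos u + t * Real.sin u)) / (1+t^2))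
      (Real.exp (-(t*u)) * Real.sin u) u := by
    intro u
    have hinner : HasDerivAt (fun u : ℝ => -(t*u)) (-t) u := by
      exact (hasDerivAt_const_mul t).neg
    have he : HasDerivAt (fun u : ℝ => Real.exp (-(t*u))) (Real.exp (-(t*u)) * (-t)) u :=
      hinner.exp
    have hc : HasDerivAt (fun u : ℝ => Real.cos u + t * Real.sin u)
        (-Real.sin u + t * Real.cos u) u :=
      (Real.hasDerivAt_cos u).add ((Real.hasDerivAt_sin u).const_mul t)
    have := ((he.mul hc).neg).div_const (1+t^2)
    refine this.congr_deriv ?_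
    field_simp
    ring
  rw [intervalIntegral.integral_eq_sub_of_hasDerivAt (fun u _ => key u)
    (Continuous.intervalIntegrable (by continuity) _ _)]
  simp only [mul_zero, neg_zero, Real.exp_zero, Real.cos_zero, Real.sin_zero]
  field_simp
  ring

lemma err_bound (M t : ℝ) (ht : 0 ≤ t) :
    |Real.exp (-(t*M)) * (Real.cos M + t * Real.sin M) / (1+t^2)|
      ≤ 2 * Real.exp (-(t*M)) := by
  have h1t : (0:ℝ) < 1 + t^2 := by positivity
  have hcs : |Real.cos M + t * Real.sin M| ≤ 1 + t := by
    calc |Real.cos M + t * Real.sin M| ≤ |Real.cos M| + |t * Real.sin M| := abs_add_le _ _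
      _ ≤ 1 + t := by
          rw [abs_mul, abs_of_nonneg ht]
          have := Real.abs_cos_le_one M
          have h2 := Real.abs_sin_le_one M
          nlinarith
  rw [abs_div, abs_mul, Real.abs_exp, abs_of_pos h1t, div_le_iff₀ h1t]
  have hexp := Real.exp_pos (-(t*M))
  nlinarith [mul_le_mul_of_nonneg_left hcs hexp.le, sq_nonneg (t - 1/2),
    mul_pos hexp h1t]

lemma Si_eq (M : ℝ) (hM : 0 < M) :
    Si M = π/2 - ∫ t in Set.Ioi (0:ℝ),
      Real.exp (-(t*M)) * (Real.cos M + t * Real.sin M) / (1+t^2) := by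
  set F : ℝ × ℝ → ℝ := fun p => Real.exp (-(p.2 * p.1)) * Real.sin p.1 with hF
  set μ := volume.restrict (Set.Ioc (0:ℝ) M) with hμ
  set ν := volume.restrict (Set.Ioi (0:ℝ)) with hν
  have hcont : Continuous F := by fun_prop
  have haesm : AEStronglyMeasurable F (μ.prod ν) := hcont.aestronglyMeasurable
  have hslice : ∀ u : ℝ, 0 < u →
      Integrable (fun t => Real.exp (-(t * u)) * Real.sin u) ν := by
    intro u hu
    exact (integrableOn_exp_neg_mul hu).mul_const (Real.sin u)
  have hexpint : ∀ u : ℝ, 0 < u →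
      (∫ t, Real.exp (-(t * u)) ∂ν) = 1 / u := fun u hu => integral_exp_tail hu
  have hint : Integrable F (μ.prod ν) := by
    rw [MeasureTheory.integrable_prod_iff haesm]
    constructor
    · filter_upwards [self_mem_ae_restrict (measurableSet_Ioc (a := (0:ℝ)) (b := M))]
        with u hu
      exact hslice u hu.1
    · refine Integrable.mono' (g := fun _ => (1:ℝ))
        (integrableOn_const measure_Ioc_lt_top.ne)
        haesm.norm.integral_prod_right' ?_
      filter_upwards [self_mem_ae_restrict (measurableSet_Ioc (a := (0:ℝ)) (b := M))]
        with u hu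
      have hu0 : 0 < u := hu.1
      have hnorm : (fun t => ‖F (u, t)‖) = fun t => Real.exp (-(t * u)) * |Real.sin u| := by
        funext t
        simp only [hF, Real.norm_eq_abs, abs_mul, Real.abs_exp]
      rw [Real.norm_eq_abs, hnorm, MeasureTheory.integral_mul_const, hexpint u hu0]
      have hs : |Real.sin u| ≤ u := by
        calc |Real.sin u| ≤ |u| := Real.abs_sin_le_abs
          _ = u := abs_of_pos hu0
      rw [abs_of_nonneg (by positivity)]
      rw [div_mul_eq_mul_div, one_mul, div_le_one hu0]
      exact hs
  have swap : (∫ u, ∫ t, F (u, t) ∂ν ∂μ) = ∫ t, ∫ u, F (u, t) ∂μ ∂ν :=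
    MeasureTheory.integral_integral_swap hint
  have step1 : Si M = ∫ u, ∫ t, F (u, t) ∂ν ∂μ := by
    rw [Si, intervalIntegral.integral_of_le hM.le, hμ]
    refine setIntegral_congr_fun measurableSet_Ioc (fun u hu => ?_)
    have hu0 : 0 < u := hu.1
    simp only [hF]
    rw [MeasureTheory.integral_mul_const, hexpint u hu0, div_mul_eq_mul_div, one_mul]
  have step2 : ∀ t : ℝ, (∫ u, F (u, t) ∂μ)
      = (1 - Real.exp (-(t*M)) * (Real.cos M + t * Real.sin M)) / (1 + t^2) := by
    intro t
    rw [hμ, ← intervalIntegral.integral_of_le hM.le]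
    exact integral_exp_sin t M
  rw [step1, swap]
  have step3 : (∫ t, ∫ u, F (u, t) ∂μ ∂ν)
      = ∫ t, ((1 + t^2)⁻¹
          - Real.exp (-(t*M)) * (Real.cos M + t * Real.sin M) / (1 + t^2)) ∂ν := by
    refine integral_congr_ae (Filter.Eventually.of_forall fun t => ?_)
    show (∫ u, F (u, t) ∂μ) = _
    rw [step2 t, sub_div, one_div]
  rw [step3]
  have hint1 : Integrable (fun t : ℝ => (1 + t^2)⁻¹) ν :=
    integrable_inv_one_add_sq.integrableOn
  have hint2 : Integrable
      (fun t : ℝ => Real.exp (-(t*M)) * (Real.cos M + t * Real.sin M) / (1 + t^2)) ν := by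
    refine Integrable.mono' (g := fun t => 2 * Real.exp (-(t*M)))
      ((integrableOn_exp_neg_mul hM).const_mul 2)
      (Continuous.aestronglyMeasurable (Continuous.div (by fun_prop) (by fun_prop)
        (fun t => by positivity))) ?_
    filter_upwards [self_mem_ae_restrict (measurableSet_Ioi (a := (0:ℝ)))] with t ht
    rw [Real.norm_eq_abs]
    exact err_bound M t (le_of_lt ht)
  rw [MeasureTheory.integral_sub hint1 hint2]
  congr 1
  rw [hν, integral_Ioi_inv_one_add_sq, Real.arctan_zero, sub_zero]

lemma Si_tail (M : ℝ) (hM : 1 ≤ M) : |Si M - π / 2| ≤ 2 / M := by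
  have hM0 : 0 < M := lt_of_lt_of_le one_pos hM
  rw [Si_eq M hM0]
  have heq : π/2 - (∫ t in Set.Ioi (0:ℝ),
      Real.exp (-(t*M)) * (Real.cos M + t * Real.sin M) / (1+t^2)) - π/2
    = -(∫ t in Set.Ioi (0:ℝ),
      Real.exp (-(t*M)) * (Real.cos M + t * Real.sin M) / (1+t^2)) := by ring
  rw [heq, abs_neg]
  have hmaj : Integrable (fun t : ℝ => 2 * Real.exp (-(t*M)))
      (volume.restrict (Set.Ioi (0:ℝ))) := (integrableOn_exp_neg_mul hM0).const_mul 2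
  calc |∫ t in Set.Ioi (0:ℝ),
        Real.exp (-(t*M)) * (Real.cos M + t * Real.sin M) / (1+t^2)|
      ≤ ∫ t in Set.Ioi (0:ℝ), 2 * Real.exp (-(t*M)) := by
        rw [← Real.norm_eq_abs]
        refine MeasureTheory.norm_integral_le_of_norm_le hmaj ?_
        filter_upwards [self_mem_ae_restrict (measurableSet_Ioi (a := (0:ℝ)))] with t ht
        rw [Real.norm_eq_abs]
        exact err_bound M t (le_of_lt ht)
    _ = 2 / M := by
        rw [MeasureTheory.integral_const_mul, integral_exp_tail hM0]
        ring

lemma Si_abs_le (M : ℝ) (hM : 0 ≤ M) : |Si M| ≤ 4 := by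
  rcases le_total M 1 with h | h
  · have hb := intervalIntegral.norm_integral_le_of_norm_le_const
      (C := 1) (f := fun u => Real.sin u / u) (a := (0:ℝ)) (b := M)
      (fun x _ => by simpa only [Real.norm_eq_abs] using _root_.abs_sinc_le_one x)
    rw [Real.norm_eq_abs] at hb
    calc |Si M| ≤ 1 * |M - 0| := hb
      _ ≤ 4 := by rw [one_mul, sub_zero, abs_of_nonneg hM]; linarith
  · have h2 := Si_tail M h
    have h3 : 2 / M ≤ 2 := by
      rw [div_le_iff₀ (by linarith)]; nlinarith
    have h4 : |Si M| ≤ |Si M - π/2| + |π/2| := by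
      calc |Si M| = |(Si M - π/2) + π/2| := by ring_nf
        _ ≤ |Si M - π/2| + |π/2| := abs_add_le _ _
    have h5 : |π/2| = π/2 := abs_of_pos (by positivity)
    have h6 : π ≤ 4 := Real.pi_le_four
    linarith

lemma Si_scale (c m : ℝ) (hc : c ≠ 0) :
    ∫ t in (0:ℝ)..m, Real.sin (t*c) / t = Si (m*c) := by
  have heq : ∀ t : ℝ, Real.sin (t*c) / t = (fun u => Real.sin u / u) (t*c) * c := by
    intro t
    rcases eq_or_ne t 0 with rfl | ht
    · simp
    · field_simp
  calc ∫ t in (0:ℝ)..m, Real.sin (t*c)/t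
      = ∫ t in (0:ℝ)..m, (fun u => Real.sin u / u) (t*c) * c :=
        intervalIntegral.integral_congr (fun t _ => heq t)
    _ = (∫ t in (0:ℝ)..m, (fun u => Real.sin u / u) (t*c)) * c :=
        intervalIntegral.integral_mul_const c _
    _ = (c⁻¹ • ∫ u in (0*c:ℝ)..(m*c), Real.sin u / u) * c := by
        congr 1
        exact intervalIntegral.integral_comp_mul_right (fun u => Real.sin u / u) hc
    _ = Si (m*c) := by
        rw [zero_mul, smul_eq_mul, Si]
        field_simp

set_option maxHeartbeats 2000000 in
theorem stmt_15 :
    ∃ C : ℝ, 0 < C ∧ ∀ d : ℕ, 2 ≤ d →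
      ∫ x in Set.Ioi (0 : ℝ),
          |1 - (2 / π) * ∫ t in (0 : ℝ)..(min (Real.sqrt (100 * Real.log d)) x),
              Real.sin (t * Real.sqrt d) / t| * gaussDensity x
        ≤ C * Real.log d / Real.sqrt d := by
  refine ⟨10, by norm_num, fun d hd => ?_⟩
  have hd2 : (2:ℝ) ≤ (d:ℝ) := by exact_mod_cast hd
  have hd0 : (0:ℝ) < d := by linarith
  have hL : (0.69:ℝ) < Real.log d := by
    have h1 : (0.6931471803:ℝ) < Real.log 2 := Real.log_two_gt_d9
    have h2 : Real.log 2 ≤ Real.log d := Real.log_le_log (by norm_num) hd2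
    linarith
  set c : ℝ := Real.sqrt d with hc_def
  set τ : ℝ := Real.sqrt (100 * Real.log d) with hτ_def
  have hc1 : 1 ≤ c := by
    rw [hc_def, show (1:ℝ) = Real.sqrt 1 by simp]
    exact Real.sqrt_le_sqrt (by linarith)
  have hc0 : 0 < c := lt_of_lt_of_le one_pos hc1
  have hτ8 : 8 ≤ τ := by
    rw [hτ_def, show (8:ℝ) = Real.sqrt 64 by
      rw [show (64:ℝ) = 8^2 by norm_num, Real.sqrt_sq]; norm_num]
    exact Real.sqrt_le_sqrt (by nlinarith)
  have hτ0 : 0 < τ := by linarith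
  set a : ℝ := c⁻¹ with ha_def
  have ha0 : 0 < a := by positivity
  have ha1 : a ≤ 1 := by
    rw [ha_def]
    exact inv_le_one_of_one_le₀ hc1
  have haτ : a ≤ τ := by linarith
  set G : ℝ → ℝ := fun x => |1 - (2/π) * Si (min τ x * c)| * gaussDensity x with hG_def
  have hGx : ∀ x, G x = |1 - (2/π) * Si (min τ x * c)| * gaussDensity x := fun _ => rfl
  have hπ3 := Real.pi_gt_three
  have hπ0 : (0:ℝ) < π := by linarith
  -- facts about the Gaussian density
  have gd_nonneg : ∀ x, 0 ≤ gaussDensity x := fun x => by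
    rw [gaussDensity]; positivity
  have h2π : (2:ℝ) ≤ Real.sqrt (2*π) := by
    have hs : Real.sqrt (2*π) ^ 2 = 2*π := Real.sq_sqrt (by positivity)
    nlinarith [Real.sqrt_nonneg (2*π)]
  have gd_le : ∀ x, gaussDensity x ≤ 1/2 := by
    intro x
    rw [gaussDensity]
    have h1 : Real.exp (-x^2/2) ≤ 1 := Real.exp_le_one_iff.2 (by nlinarith [sq_nonneg x])
    have h2 : (0:ℝ) < Real.sqrt (2*π) := by linarith
    rw [div_le_iff₀ h2]
    nlinarith
  have gd_eq : ∀ x : ℝ, gaussDensity x = Real.exp (-(1/2 : ℝ) * x^2) / Real.sqrt (2*π) := by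
    intro x
    have h : -x^2/2 = -(1/2 : ℝ) * x^2 := by ring
    rw [gaussDensity, h]
  have gd_cont : Continuous gaussDensity := by
    have h : Continuous fun x : ℝ => Real.exp (-x^2/2) := by fun_prop
    have : gaussDensity = fun x => Real.exp (-x^2/2) / Real.sqrt (2*π) := by
      funext x; rw [gaussDensity]
    rw [this]
    exact h.div_const _
  have gd_int : Integrable gaussDensity := by
    have h := (integrable_exp_neg_mul_sq (by norm_num : (0:ℝ) < 1/2)).div_const
      (Real.sqrt (2*π))
    exact h.congr (Filter.Eventually.of_forall fun x => (gd_eq x).symm)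
  have gd_total : (∫ x : ℝ, gaussDensity x) = 1 := by
    have h1 : (∫ x : ℝ, Real.exp (-(1/2:ℝ) * x^2)) = Real.sqrt (π / (1/2)) :=
      integral_gaussian (1/2)
    have h2 : (fun x : ℝ => gaussDensity x)
        = fun x => Real.exp (-(1/2:ℝ) * x^2) / Real.sqrt (2*π) := funext gd_eq
    rw [h2, MeasureTheory.integral_div, h1, show π/(1/2 : ℝ) = 2*π by ring]
    exact div_self (by positivity : (0:ℝ) < Real.sqrt (2*π)).ne'
  -- rewriting the integrand via Si
  have hrw : (∫ x in Set.Ioi (0:ℝ),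
        |1 - (2/π) * ∫ t in (0:ℝ)..(min τ x), Real.sin (t * c) / t| * gaussDensity x)
      = ∫ x in Set.Ioi (0:ℝ), G x := by
    refine setIntegral_congr_fun measurableSet_Ioi (fun x _ => ?_)
    rw [hGx x, Si_scale c (min τ x) hc0.ne']
  -- pointwise bounds
  have key_bound : ∀ x : ℝ, 0 ≤ x → |1 - (2/π) * Si (min τ x * c)| ≤ 4 := by
    intro x hx
    have hm : 0 ≤ min τ x * c := mul_nonneg (le_min hτ0.le hx) hc0.le
    have h1 := Si_abs_le _ hm
    have hp1 : (0:ℝ) < 2/π := by positivity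
    have hp2 : 2/π ≤ 2/3 := by
      rw [div_le_div_iff₀ hπ0 (by norm_num)]; linarith
    have habs : |(2/π) * Si (min τ x * c)| ≤ (2/3) * 4 := by
      rw [abs_mul, abs_of_pos hp1]
      exact mul_le_mul hp2 h1 (abs_nonneg _) (by norm_num)
    calc |1 - (2/π) * Si (min τ x * c)|
        = |1 + -((2/π) * Si (min τ x * c))| := by rw [sub_eq_add_neg]
      _ ≤ |(1:ℝ)| + |-((2/π) * Si (min τ x * c))| := abs_add_le _ _
      _ = 1 + |(2/π) * Si (min τ x * c)| := by rw [abs_one, abs_neg]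
      _ ≤ 4 := by linarith
  have key_bound2 : ∀ M : ℝ, 1 ≤ M → |1 - (2/π) * Si M| ≤ 2 / M := by
    intro M hM
    have hM0 : (0:ℝ) < M := by linarith
    have heq : 1 - (2/π) * Si M = (2/π) * (π/2 - Si M) := by field_simp
    rw [heq, abs_mul, abs_of_pos (by positivity : (0:ℝ) < 2/π), abs_sub_comm]
    have h1 := Si_tail M hM
    have h2 : 2/π ≤ 1 := by rw [div_le_one hπ0]; linarith
    calc (2/π) * |Si M - π/2| ≤ (2/π) * (2/M) :=
        mul_le_mul_of_nonneg_left h1 (by positivity)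
      _ ≤ 1 * (2/M) := mul_le_mul_of_nonneg_right h2 (by positivity)
      _ = 2/M := one_mul _
  -- integrability of G
  have hGcont : Continuous G := by
    rw [hG_def]
    refine Continuous.mul (Continuous.abs ?_) gd_cont
    exact continuous_const.sub (continuous_const.mul
      (Si_continuous.comp ((continuous_const.min continuous_id).mul continuous_const)))
  have hGint : IntegrableOn G (Set.Ioi (0:ℝ)) := by
    refine Integrable.mono' (g := fun x => 4 * gaussDensity x)
      ((gd_int.const_mul 4).integrableOn) hGcont.aestronglyMeasurable.restrict ?_
    filter_upwards [self_mem_ae_restrict (measurableSet_Ioi (a := (0:ℝ)))] with x hx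
    rw [Real.norm_eq_abs, hGx x, abs_mul, abs_abs, abs_of_nonneg (gd_nonneg x)]
    exact mul_le_mul_of_nonneg_right (key_bound x (le_of_lt hx)) (gd_nonneg x)
  -- splitting the domain
  have hsub1 : Set.Ioc (0:ℝ) a ⊆ Set.Ioi 0 := Set.Ioc_subset_Ioi_self
  have hsub2 : Set.Ioi a ⊆ Set.Ioi (0:ℝ) := Set.Ioi_subset_Ioi ha0.le
  have hsub3 : Set.Ioc a τ ⊆ Set.Ioi (0:ℝ) := Set.Ioc_subset_Ioi_self.trans hsub2
  have hsub4 : Set.Ioi τ ⊆ Set.Ioi (0:ℝ) := Set.Ioi_subset_Ioi (by linarith)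
  have hsplit : (∫ x in Set.Ioi (0:ℝ), G x)
      = (∫ x in Set.Ioc 0 a, G x)
        + ((∫ x in Set.Ioc a τ, G x) + ∫ x in Set.Ioi τ, G x) := by
    have e1 : (∫ x in Set.Ioi a, G x)
        = (∫ x in Set.Ioc a τ, G x) + ∫ x in Set.Ioi τ, G x := by
      rw [← setIntegral_union (Set.Ioc_disjoint_Ioi le_rfl) measurableSet_Ioi
        (hGint.mono_set hsub3) (hGint.mono_set hsub4), Set.Ioc_union_Ioi_eq_Ioi haτ]
    have e2 : (∫ x in Set.Ioi (0:ℝ), G x)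
        = (∫ x in Set.Ioc 0 a, G x) + ∫ x in Set.Ioi a, G x := by
      rw [← setIntegral_union (Set.Ioc_disjoint_Ioi le_rfl) measurableSet_Ioi
        (hGint.mono_set hsub1) (hGint.mono_set hsub2), Set.Ioc_union_Ioi_eq_Ioi ha0.le]
    rw [e2, e1]
  -- piece 1
  have P1 : (∫ x in Set.Ioc (0:ℝ) a, G x) ≤ 2 * a := by
    have hb : ∀ x ∈ Set.Ioc (0:ℝ) a, G x ≤ 2 := by
      intro x hx
      have : G x ≤ 4 * (1/2) :=
        mul_le_mul (key_bound x hx.1.le) (gd_le x) (gd_nonneg x) (by norm_num)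
      linarith
    calc (∫ x in Set.Ioc (0:ℝ) a, G x) ≤ ∫ _x in Set.Ioc (0:ℝ) a, (2:ℝ) :=
        setIntegral_mono_on (hGint.mono_set hsub1)
          (integrableOn_const measure_Ioc_lt_top.ne) measurableSet_Ioc hb
      _ = 2 * a := by
        rw [setIntegral_const, measureReal_def, Real.volume_Ioc, smul_eq_mul,
          ENNReal.toReal_ofReal (by linarith)]
        ring
  -- piece 2
  have P2 : (∫ x in Set.Ioc a τ, G x) ≤ (Real.log τ - Real.log a) / c := by
    have hinv : IntervalIntegrable (fun x : ℝ => x⁻¹) volume a τ := by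
      have := intervalIntegral.intervalIntegrable_inv (μ := volume) (f := fun x : ℝ => x) (a := a) (b := τ)
        (fun x hx => ?_) continuousOn_id
      · exact this
      · rw [Set.uIcc_of_le haτ] at hx
        exact (lt_of_lt_of_le ha0 hx.1).ne'
    have hint : IntegrableOn (fun x : ℝ => c⁻¹ * x⁻¹) (Set.Ioc a τ) := hinv.1.const_mul c⁻¹
    have hb : ∀ x ∈ Set.Ioc a τ, G x ≤ c⁻¹ * x⁻¹ := by
      intro x hx
      have hx0 : 0 < x := lt_of_lt_of_le ha0 hx.1.le
      have hmin : min τ x = x := min_eq_right hx.2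
      have hM1 : 1 ≤ x * c := by
        have h := mul_le_mul_of_nonneg_right hx.1.le hc0.le
        rw [ha_def, inv_mul_cancel₀ hc0.ne'] at h
        linarith
      have h1 := key_bound2 (x*c) hM1
      have hstep : G x ≤ (2/(x*c)) * (1/2) := by
        rw [hGx x, hmin]
        exact mul_le_mul h1 (gd_le x) (gd_nonneg x) (by positivity)
      calc G x ≤ (2/(x*c)) * (1/2) := hstep
        _ = c⁻¹ * x⁻¹ := by field_simp
    calc (∫ x in Set.Ioc a τ, G x) ≤ ∫ x in Set.Ioc a τ, c⁻¹ * x⁻¹ :=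
        setIntegral_mono_on (hGint.mono_set hsub3) hint measurableSet_Ioc hb
      _ = c⁻¹ * ∫ x in Set.Ioc a τ, x⁻¹ := by rw [MeasureTheory.integral_const_mul]
      _ = (Real.log τ - Real.log a) / c := by
          rw [← intervalIntegral.integral_of_le haτ, integral_inv_of_pos ha0 hτ0,
            Real.log_div hτ0.ne' ha0.ne', inv_mul_eq_div]
  -- piece 3
  have P3 : (∫ x in Set.Ioi τ, G x) ≤ 2/(τ*c) := by
    have hb : ∀ x ∈ Set.Ioi τ, G x ≤ (2/(τ*c)) * gaussDensity x := by
      intro x hx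
      have hmin : min τ x = τ := min_eq_left (le_of_lt hx)
      have hM1 : 1 ≤ τ * c := by nlinarith
      have h1 := key_bound2 (τ*c) hM1
      rw [hGx x, hmin]
      exact mul_le_mul_of_nonneg_right h1 (gd_nonneg x)
    calc (∫ x in Set.Ioi τ, G x) ≤ ∫ x in Set.Ioi τ, (2/(τ*c)) * gaussDensity x :=
        setIntegral_mono_on (hGint.mono_set hsub4)
          ((gd_int.const_mul _).integrableOn) measurableSet_Ioi hb
      _ = (2/(τ*c)) * ∫ x in Set.Ioi τ, gaussDensity x := by
          rw [MeasureTheory.integral_const_mul]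
      _ ≤ (2/(τ*c)) * 1 := by
          refine mul_le_mul_of_nonneg_left ?_ (by positivity)
          rw [← gd_total]
          exact setIntegral_le_integral gd_int (Filter.Eventually.of_forall gd_nonneg)
      _ = 2/(τ*c) := mul_one _
  -- final arithmetic
  have e2 : Real.log c = Real.log d / 2 := by
    rw [hc_def]; exact Real.log_sqrt (le_of_lt hd0)
  have e3 : Real.log τ = Real.log (100 * Real.log d) / 2 := by
    rw [hτ_def]; exact Real.log_sqrt (by positivity)
  have e4 : Real.log (100 * Real.log d) ≤ 8 * Real.log d := by
    have h7 : (128:ℝ) ≤ (d:ℝ)^7 := by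
      calc (128:ℝ) = 2^7 := by norm_num
        _ ≤ (d:ℝ)^7 := pow_le_pow_left₀ (by norm_num) hd2 7
    have hlogle : Real.log d ≤ (d:ℝ) := by
      have := Real.log_le_sub_one_of_pos hd0
      linarith
    have h8 : 100 * Real.log d ≤ (d:ℝ)^8 := by
      have hpow : (d:ℝ)^8 = (d:ℝ)^7 * d := by ring
      nlinarith
    calc Real.log (100 * Real.log d) ≤ Real.log ((d:ℝ)^8) :=
        Real.log_le_log (by linarith) h8
      _ = 8 * Real.log d := by rw [Real.log_pow]; norm_num
  have e1 : Real.log a = - Real.log c := by rw [ha_def, Real.log_inv]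
  have hτ2 : 2/τ ≤ 1 := by rw [div_le_one hτ0]; linarith
  have hfinal : 2 * a + (Real.log τ - Real.log a)/c + 2/(τ*c) ≤ 10 * Real.log d / c := by
    have hXY : 2 * a + (Real.log τ - Real.log a)/c + 2/(τ*c)
        = (2 + (Real.log τ + Real.log c) + 2/τ)/c := by
      rw [e1, ha_def]
      field_simp
      ring
    have hnum : 2 + (Real.log τ + Real.log c) + 2/τ ≤ 10 * Real.log d := by
      rw [e2, e3]
      nlinarith
    rw [hXY]
    exact (div_le_div_iff_of_pos_right hc0).mpr hnum
  rw [hrw, hsplit]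
  linarith [P1, P2, P3, hfinal]
end

section
/- There exists a constant C > 0 such that for every integer d ≥ 2 and every τ > 0, ∫_0^∞ |∫_0^{min(x,τ)} ((e^{t²/4} − 1)/t) · sin(t√d) dt| · φ(x) dx ≤ C/√d. -/
open MeasureTheory ProbabilityTheory Real

noncomputable def uu (t : ℝ) : ℝ := (Real.exp (t ^ 2 / 4) - 1) / t

noncomputable def uu' (t : ℝ) : ℝ :=
  if t = 0 then 1/4
  else ((t ^ 2 / 2) * Real.exp (t ^ 2 / 4) - (Real.exp (t ^ 2 / 4) - 1)) / t ^ 2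

lemma uu_zero : uu 0 = 0 := by simp [uu]

lemma uu_hasDerivAt (t : ℝ) : HasDerivAt uu (uu' t) t := by
  rcases eq_or_ne t 0 with rfl | ht
  · rw [show uu' 0 = 1/4 by simp [uu'], hasDerivAt_iff_tendsto_slope]
    have h1 : Filter.Tendsto (fun s : ℝ => (Real.exp s - 1) / s) (nhdsWithin 0 {(0:ℝ)}ᶜ)
        (nhds 1) := by
      have h := Real.hasDerivAt_exp 0
      rw [hasDerivAt_iff_tendsto_slope] at h
      simp only [Real.exp_zero] at h
      refine h.congr' ?_
      filter_upwards [self_mem_nhdsWithin] with s hs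
      simp [slope_def_field]
    have h2 : Filter.Tendsto (fun t : ℝ => t ^ 2 / 4) (nhdsWithin 0 {(0:ℝ)}ᶜ)
        (nhdsWithin 0 {(0:ℝ)}ᶜ) := by
      rw [tendsto_nhdsWithin_iff]
      constructor
      · have : Filter.Tendsto (fun t : ℝ => t ^ 2 / 4) (nhds 0) (nhds 0) := by
          have := ((continuous_pow 2).div_const (4:ℝ)).tendsto (0:ℝ)
          simpa using this
        exact this.mono_left nhdsWithin_le_nhds
      · filter_upwards [self_mem_nhdsWithin] with t ht
        simp only [Set.mem_compl_iff, Set.mem_singleton_iff] at ht ⊢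
        positivity
    have h3 := (h1.comp h2).div_const (4:ℝ)
    refine h3.congr' ?_
    filter_upwards [self_mem_nhdsWithin] with t ht
    simp only [Set.mem_compl_iff, Set.mem_singleton_iff] at ht
    simp only [Function.comp, slope_def_field, uu_zero, uu]
    field_simp
    ring
  · have hsq : HasDerivAt (fun t : ℝ => t ^ 2 / 4) (t / 2) t := by
      have := (hasDerivAt_pow 2 t).div_const (4:ℝ)
      refine this.congr_deriv ?_
      ring
    have h1 : HasDerivAt (fun t : ℝ => Real.exp (t ^ 2 / 4) - 1)
        (Real.exp (t ^ 2 / 4) * (t / 2)) t :=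
      ((Real.hasDerivAt_exp _).comp t hsq).sub_const 1
    have h2 := h1.div (hasDerivAt_id t) ht
    refine h2.congr_deriv ?_
    simp only [uu', if_neg ht, id]
    field_simp

lemma uu'_nonneg (t : ℝ) : 0 ≤ uu' t := by
  unfold uu'
  split_ifs with h
  · norm_num
  · have hE := Real.exp_pos (t ^ 2 / 4)
    have hkey : Real.exp (t ^ 2 / 4) - 1 ≤ t ^ 2 / 4 * Real.exp (t ^ 2 / 4) := by
      have h1 := Real.add_one_le_exp (-(t ^ 2 / 4))
      rw [Real.exp_neg] at h1
      have h2 := mul_inv_cancel₀ hE.ne'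
      nlinarith
    have ht2 : (0:ℝ) < t ^ 2 := by positivity
    apply div_nonneg _ ht2.le
    nlinarith

lemma uu'_le (t : ℝ) : uu' t ≤ Real.exp (t ^ 2 / 4) / 2 := by
  unfold uu'
  split_ifs with h
  · subst h; simp; nlinarith [Real.exp_pos (0:ℝ), Real.one_le_exp (le_refl (0:ℝ))]
  · have ht2 : (0:ℝ) < t ^ 2 := by positivity
    rw [div_le_div_iff₀ ht2 (by norm_num : (0:ℝ) < 2)]
    have hE1 : 1 ≤ Real.exp (t ^ 2 / 4) := Real.one_le_exp (by positivity)
    nlinarith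

lemma uu'_measurable : Measurable uu' := by
  unfold uu'
  apply Measurable.ite (MeasurableSet.singleton (0:ℝ)) measurable_const
  fun_prop

lemma uu'_intervalIntegrable (a b : ℝ) : IntervalIntegrable uu' volume a b := by
  set M := max |a| |b| with hM
  apply IntervalIntegrable.mono_fun' (g := fun _ : ℝ => Real.exp (M ^ 2 / 4) / 2)
    intervalIntegrable_const
  · exact uu'_measurable.aestronglyMeasurable.restrict
  · filter_upwards [ae_restrict_mem measurableSet_uIoc] with x hx
    have hxM : |x| ≤ M := by
      have h1 : x ≤ max |a| |b| :=
        hx.2.trans (max_le_max (le_abs_self a) (le_abs_self b))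
      have h2 : -(max |a| |b|) ≤ x := by
        refine le_trans ?_ hx.1.le
        apply le_min
        · exact le_trans (neg_le_neg (le_max_left |a| |b|)) (neg_abs_le a)
        · exact le_trans (neg_le_neg (le_max_right |a| |b|)) (neg_abs_le b)
      rw [abs_le]; exact ⟨h2, h1⟩
    have hx2 : x ^ 2 ≤ M ^ 2 := by
      rw [← sq_abs x]
      exact pow_le_pow_left₀ (abs_nonneg x) hxM 2
    simp only [Real.norm_eq_abs]
    rw [abs_of_nonneg (uu'_nonneg x)]
    refine (uu'_le x).trans ?_
    have : Real.exp (x ^ 2 / 4) ≤ Real.exp (M ^ 2 / 4) := Real.exp_le_exp.2 (by linarith)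
    linarith

lemma uu_eq_integral (m : ℝ) : ∫ t in (0:ℝ)..m, uu' t = uu m := by
  rw [intervalIntegral.integral_eq_sub_of_hasDerivAt (fun t _ => uu_hasDerivAt t)
    (uu'_intervalIntegrable 0 m), uu_zero, sub_zero]

lemma uu_nonneg {m : ℝ} (hm : 0 ≤ m) : 0 ≤ uu m := by
  rw [← uu_eq_integral]
  exact intervalIntegral.integral_nonneg hm fun t _ => uu'_nonneg t

lemma uu_mono {m x : ℝ} (hmx : m ≤ x) : uu m ≤ uu x := by
  have h1 := intervalIntegral.integral_eq_sub_of_hasDerivAt (a := m) (b := x)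
    (fun t _ => uu_hasDerivAt t) (uu'_intervalIntegrable m x)
  have h2 : 0 ≤ ∫ y in m..x, uu' y :=
    intervalIntegral.integral_nonneg hmx fun t _ => uu'_nonneg t
  rw [h1] at h2
  linarith

lemma inner_bound (lam m : ℝ) (hlam : 0 < lam) (hm : 0 ≤ m) :
    |∫ t in (0:ℝ)..m, uu t * Real.sin (t * lam)| ≤ 4 * uu m / lam := by
  set v : ℝ → ℝ := fun t => (1 - Real.cos (lam * t)) / lam with hv_def
  have hv : ∀ t : ℝ, HasDerivAt v (Real.sin (t * lam)) t := by
    intro t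
    have h1 : HasDerivAt (fun t : ℝ => lam * t) lam t := by
      simpa using (hasDerivAt_id t).const_mul lam
    have h2 := (Real.hasDerivAt_cos (lam * t)).comp t h1
    have h3 := (h2.const_sub 1).div_const lam
    refine h3.congr_deriv ?_
    field_simp [hlam.ne']
  have hvcont : Continuous v := by
    apply Continuous.div_const
    exact continuous_const.sub (Real.continuous_cos.comp (continuous_const.mul continuous_id))
  have hvb : ∀ t : ℝ, 0 ≤ v t ∧ v t ≤ 2 / lam := by
    intro t
    constructor
    · apply div_nonneg _ hlam.le
      linarith [Real.cos_le_one (lam * t)]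
    · show (1 - Real.cos (lam * t)) / lam ≤ 2 / lam
      gcongr
      linarith [Real.neg_one_le_cos (lam * t)]
  have hibp := intervalIntegral.integral_mul_deriv_eq_deriv_mul
      (a := (0:ℝ)) (b := m) (u := uu) (v := v) (u' := uu')
      (v' := fun t => Real.sin (t * lam))
      (fun t _ => uu_hasDerivAt t) (fun t _ => hv t)
      (uu'_intervalIntegrable 0 m)
      (Continuous.intervalIntegrable (by continuity) 0 m)
  rw [hibp, uu_zero, zero_mul, sub_zero]
  have hIv : IntervalIntegrable (fun t => uu' t * v t) volume 0 m :=
    (uu'_intervalIntegrable 0 m).mul_continuousOn hvcont.continuousOn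
  have h4 : |∫ t in (0:ℝ)..m, uu' t * v t| ≤ 2 / lam * uu m := by
    calc |∫ t in (0:ℝ)..m, uu' t * v t| ≤ ∫ t in (0:ℝ)..m, |uu' t * v t| :=
          intervalIntegral.abs_integral_le_integral_abs hm
      _ ≤ ∫ t in (0:ℝ)..m, 2 / lam * uu' t := by
          apply intervalIntegral.integral_mono_on hm hIv.abs
            ((uu'_intervalIntegrable 0 m).const_mul _)
          intro t _
          rw [abs_mul, abs_of_nonneg (uu'_nonneg t), abs_of_nonneg (hvb t).1]
          calc uu' t * v t ≤ uu' t * (2 / lam) :=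
                mul_le_mul_of_nonneg_left (hvb t).2 (uu'_nonneg t)
            _ = 2 / lam * uu' t := mul_comm _ _
      _ = 2 / lam * uu m := by
          rw [intervalIntegral.integral_const_mul, uu_eq_integral]
  have h5 : |uu m * v m| ≤ uu m * (2 / lam) := by
    rw [abs_of_nonneg (mul_nonneg (uu_nonneg hm) (hvb m).1)]
    exact mul_le_mul_of_nonneg_left (hvb m).2 (uu_nonneg hm)
  calc |uu m * v m - ∫ t in (0:ℝ)..m, uu' t * v t|
      ≤ |uu m * v m| + |∫ t in (0:ℝ)..m, uu' t * v t| := abs_sub _ _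
    _ ≤ uu m * (2 / lam) + 2 / lam * uu m := add_le_add h5 h4
    _ = 4 * uu m / lam := by ring

theorem stmt_16 :
    ∃ C : ℝ, 0 < C ∧ ∀ d : ℕ, 2 ≤ d → ∀ τ : ℝ, 0 < τ →
      ∫ x in Set.Ioi (0 : ℝ),
          |∫ t in (0 : ℝ)..(min x τ),
              ((Real.exp (t ^ 2 / 4) - 1) / t) * Real.sin (t * Real.sqrt d)| * gaussDensity x
        ≤ C / Real.sqrt d := by
  refine ⟨1, one_pos, ?_⟩
  intro d hd τ hτ
  have hd2 : (2:ℝ) ≤ (d:ℝ) := by exact_mod_cast hd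
  have hlam : 0 < Real.sqrt d := Real.sqrt_pos.2 (by linarith)
  set lam := Real.sqrt (d : ℝ) with hlam_def
  have hS : (0:ℝ) < Real.sqrt (2 * π) := Real.sqrt_pos.2 (by positivity)
  set G : ℝ → ℝ := fun x => x * Real.exp (-(1/4) * x ^ 2) / (Real.sqrt (2 * π) * lam)
    with hG_def
  have hGint : IntegrableOn G (Set.Ioi (0:ℝ)) :=
    ((integrable_mul_exp_neg_mul_sq (by norm_num : (0:ℝ) < 1/4)).div_const _).integrableOn
  have hmono : (∫ x in Set.Ioi (0 : ℝ),
      |∫ t in (0 : ℝ)..(min x τ),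
          ((Real.exp (t ^ 2 / 4) - 1) / t) * Real.sin (t * Real.sqrt d)| * gaussDensity x)
      ≤ ∫ x in Set.Ioi (0:ℝ), G x := by
    apply integral_mono_of_nonneg
    · apply Filter.Eventually.of_forall
      intro x
      have : 0 ≤ gaussDensity x := by unfold gaussDensity; positivity
      positivity
    · exact hGint
    · filter_upwards [ae_restrict_mem measurableSet_Ioi] with x hx
      have hx0 : (0:ℝ) < x := hx
      set m := min x τ with hm_def
      have hm0 : 0 ≤ m := le_min hx0.le hτ.le
      have hmx : m ≤ x := min_le_left _ _
      have h1 : |∫ t in (0:ℝ)..m, ((Real.exp (t ^ 2 / 4) - 1) / t) * Real.sin (t * lam)|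
          ≤ 4 * uu m / lam := inner_bound lam m hlam hm0
      have h3 : uu x ≤ x / 4 * Real.exp (x ^ 2 / 4) := by
        have hE := Real.exp_pos (x ^ 2 / 4)
        have hkey : Real.exp (x ^ 2 / 4) - 1 ≤ x ^ 2 / 4 * Real.exp (x ^ 2 / 4) := by
          have ha := Real.add_one_le_exp (-(x ^ 2 / 4))
          rw [Real.exp_neg] at ha
          have hb := mul_inv_cancel₀ hE.ne'
          nlinarith
        rw [uu, div_le_iff₀ hx0]
        nlinarith
      have hφ : 0 ≤ gaussDensity x := by unfold gaussDensity; positivity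
      calc |∫ t in (0:ℝ)..m, ((Real.exp (t ^ 2 / 4) - 1) / t) * Real.sin (t * lam)|
            * gaussDensity x
          ≤ (4 * (x / 4 * Real.exp (x ^ 2 / 4)) / lam) * gaussDensity x := by
            apply mul_le_mul_of_nonneg_right _ hφ
            refine h1.trans ?_
            gcongr
            exact (uu_mono hmx).trans h3
        _ = x * (Real.exp (x ^ 2 / 4) * Real.exp (-x ^ 2 / 2))
            / (Real.sqrt (2 * π) * lam) := by
            unfold gaussDensity
            ring
        _ = G x := by
            rw [← Real.exp_add, hG_def]
            norm_num
            ring_nf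
  have hmain : ∫ x in Set.Ioi (0:ℝ), x * Real.exp (-(1/4) * x ^ 2) = 2 := by
    have hF : ∀ x ∈ Set.Ioi (0:ℝ),
        HasDerivAt (fun x : ℝ => -2 * Real.exp (-(1/4) * x ^ 2))
          (x * Real.exp (-(1/4) * x ^ 2)) x := by
      intro x _
      have h1 : HasDerivAt (fun x : ℝ => -(1/4) * x ^ 2) (-(1/4) * (2 * x)) x := by
        simpa using ((hasDerivAt_pow 2 x).const_mul (-(1/4) : ℝ))
      have h2 := ((Real.hasDerivAt_exp _).comp x h1).const_mul (-2 : ℝ)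
      refine h2.congr_deriv ?_
      ring
    have htend : Filter.Tendsto (fun x : ℝ => -2 * Real.exp (-(1/4) * x ^ 2))
        Filter.atTop (nhds 0) := by
      have h1 : Filter.Tendsto (fun x : ℝ => -(1/4) * x ^ 2) Filter.atTop Filter.atBot := by
        apply Filter.Tendsto.const_mul_atTop_of_neg (by norm_num : (-(1/4):ℝ) < 0)
        exact Filter.tendsto_pow_atTop (by norm_num)
      have h2 := Real.tendsto_exp_atBot.comp h1
      have h3 := h2.const_mul (-2 : ℝ)
      simpa using h3
    have hInt : IntegrableOn (fun x : ℝ => x * Real.exp (-(1/4) * x ^ 2)) (Set.Ioi 0) :=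
      (integrable_mul_exp_neg_mul_sq (by norm_num : (0:ℝ) < 1/4)).integrableOn
    have := integral_Ioi_of_hasDerivAt_of_tendsto
      (Continuous.continuousWithinAt (by continuity)) hF hInt htend
    rw [this]
    norm_num
  have hGval : ∫ x in Set.Ioi (0:ℝ), G x = 2 / (Real.sqrt (2 * π) * lam) := by
    simp only [hG_def]
    rw [integral_div, hmain]
  refine hmono.trans ?_
  rw [hGval]
  have h2S : (2:ℝ) ≤ Real.sqrt (2 * π) := by
    have : (4:ℝ) ≤ 2 * π := by nlinarith [Real.pi_gt_three]
    calc (2:ℝ) = Real.sqrt 4 := by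
          rw [show (4:ℝ) = 2 ^ 2 by norm_num, Real.sqrt_sq (by norm_num : (0:ℝ) ≤ 2)]
      _ ≤ Real.sqrt (2 * π) := Real.sqrt_le_sqrt this
  rw [div_le_div_iff₀ (by positivity) hlam]
  nlinarith [hlam]
end
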